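/- Let d and d' be integers with d, d' ≥ 3, and suppose each set 𝓔_e (e ≥ 3) is a finite subset of (ℤ∖{0}) × (ℤ∖{0}) satisfying conditions (C1) and (C2). If (a,b) ∈ 𝓔_d and (a',b') ∈ 𝓔_{d'} are such that the binary forms a·X^d + b·Y^d and a'·X^{d'} + b'·Y^{d'} are isomorphic under the GL(2,ℚ) action, then d = d' and (a,b) = (a',b'). -/

import Mathlib

open MvPolynomial

/-- `q` is the `d`-th power of a rational number. -/
def IsDPow (d : ℕ) (q : ℚ) : Prop := ∃ r : ℚ, q = r ^ d

/-- Condition (C1). -/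
def CondC1 (d : ℕ) (E : Finset (ℤ × ℤ)) : Prop :=
  ∀ p ∈ E, ∀ p' ∈ E, p ≠ p' →
    ¬ IsDPow d ((p.1 : ℚ) / (p'.1 : ℚ)) ∨ ¬ IsDPow d ((p.2 : ℚ) / (p'.2 : ℚ))

/-- Condition (C2). -/
def CondC2 (d : ℕ) (E : Finset (ℤ × ℤ)) : Prop :=
  ∀ p ∈ E, ∀ p' ∈ E, p ≠ p' →
    ¬ IsDPow d ((p.1 : ℚ) / (p'.2 : ℚ)) ∨ ¬ IsDPow d ((p.2 : ℚ) / (p'.1 : ℚ))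

/-- The action of a matrix `γ = (a₁ a₂; a₃ a₄)` on a binary form `F`:
`(F ∘ γ)(X, Y) = F(a₁X + a₂Y, a₃X + a₄Y)`. -/
noncomputable def formComp (γ : Matrix (Fin 2) (Fin 2) ℚ) (f : MvPolynomial (Fin 2) ℚ) :
    MvPolynomial (Fin 2) ℚ :=
  MvPolynomial.bind₁ (fun i => C (γ i 0) * X 0 + C (γ i 1) * X 1) f

/-- Two binary forms `F` and `G` are isomorphic if there exists `γ ∈ GL(2,ℚ)` with
`F ∘ γ = G`. -/
def IsIsomorphicForm (f g : MvPolynomial (Fin 2) ℚ) : Prop :=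
  ∃ γ : Matrix (Fin 2) (Fin 2) ℚ, γ.det ≠ 0 ∧ formComp γ f = g

/-- The binomial binary form `a X^d + b Y^d` (viewed over `ℚ`). -/
noncomputable def binomialForm (d : ℕ) (a b : ℤ) : MvPolynomial (Fin 2) ℚ :=
  C (a : ℚ) * X 0 ^ d + C (b : ℚ) * X 1 ^ d

lemma single_add_single_eq (k l i j : ℕ) :
    Finsupp.single (0 : Fin 2) k + Finsupp.single 1 l = Finsupp.single 0 i + Finsupp.single 1 j ↔
      k = i ∧ l = j := by
  constructor
  · intro h
    have h0 := DFunLike.congr_fun h 0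
    have h1 := DFunLike.congr_fun h 1
    simp [Finsupp.single_apply] at h0 h1
    exact ⟨h0, h1⟩
  · rintro ⟨rfl, rfl⟩; rfl

lemma coeff_lin_pow (u v : ℚ) (d i j : ℕ) :
    coeff (Finsupp.single 0 i + Finsupp.single 1 j)
      ((C u * X 0 + C v * X 1 : MvPolynomial (Fin 2) ℚ) ^ d)
      = if i + j = d then (d.choose i : ℚ) * u ^ i * v ^ j else 0 := by
  rw [add_pow, coeff_sum]
  have hterm : ∀ k, k ∈ Finset.range (d + 1) →
      coeff (Finsupp.single 0 i + Finsupp.single 1 j)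
        ((C u * X 0 : MvPolynomial (Fin 2) ℚ) ^ k * (C v * X 1) ^ (d - k) * (d.choose k : MvPolynomial (Fin 2) ℚ))
      = if k = i ∧ d - k = j then (d.choose k : ℚ) * u ^ k * v ^ (d - k) else 0 := by
    intro k hk
    have hmono : (C u * X 0 : MvPolynomial (Fin 2) ℚ) ^ k * (C v * X 1) ^ (d - k) *
        (d.choose k : MvPolynomial (Fin 2) ℚ)
        = monomial (Finsupp.single 0 k + Finsupp.single 1 (d - k))
            ((d.choose k : ℚ) * u ^ k * v ^ (d - k)) := by
      rw [show ((d.choose k : MvPolynomial (Fin 2) ℚ)) = C (d.choose k : ℚ) from (map_natCast C _).symm]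
      rw [mul_pow, mul_pow, ← C_pow, ← C_pow, X_pow_eq_monomial, X_pow_eq_monomial]
      rw [C_mul_monomial, C_mul_monomial, mul_comm _ (C ((d.choose k : ℚ))), ← mul_assoc,
        C_mul_monomial, monomial_mul]
      congr 1
      ring
    rw [hmono, coeff_monomial]
    exact if_congr (single_add_single_eq _ _ _ _) rfl rfl
  rw [Finset.sum_congr rfl hterm]
  by_cases hij : i + j = d
  · rw [if_pos hij]
    have hi : i ∈ Finset.range (d + 1) := by simp; omega
    rw [Finset.sum_eq_single_of_mem i hi ?_]
    · rw [if_pos ⟨rfl, by omega⟩]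
      congr 2
      omega
    · intro k _ hki
      rw [if_neg (by tauto)]
  · rw [if_neg hij, Finset.sum_eq_zero]
    intro k hk
    simp only [Finset.mem_range] at hk
    rw [if_neg]
    rintro ⟨rfl, rfl⟩
    omega

lemma coeff_binomialForm (d : ℕ) (a b : ℤ) (i j : ℕ) :
    coeff (Finsupp.single 0 i + Finsupp.single 1 j) (binomialForm d a b)
      = (if d = i ∧ 0 = j then (a : ℚ) else 0) + (if 0 = i ∧ d = j then (b : ℚ) else 0) := by
  rw [binomialForm, X_pow_eq_monomial, X_pow_eq_monomial, coeff_add, coeff_C_mul, coeff_C_mul,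
    coeff_monomial, coeff_monomial,
    show (Finsupp.single (0:Fin 2) d) = Finsupp.single 0 d + Finsupp.single 1 0 by simp,
    show (Finsupp.single (1:Fin 2) d) = Finsupp.single 0 0 + Finsupp.single 1 d by simp]
  simp only [single_add_single_eq, mul_ite, mul_one, mul_zero]

/-- Corollary 3.2: within a family of binomial forms whose coefficient sets satisfy
conditions (C1) and (C2), two `GL(2,ℚ)`-isomorphic forms are equal. -/
theorem binomialForm_isomorphic_eq
    (E : ℕ → Finset (ℤ × ℤ))
    (hnz : ∀ e : ℕ, 3 ≤ e → ∀ p ∈ E e, p.1 ≠ 0 ∧ p.2 ≠ 0)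
    (hC1 : ∀ e : ℕ, 3 ≤ e → CondC1 e (E e))
    (hC2 : ∀ e : ℕ, 3 ≤ e → CondC2 e (E e))
    (d d' : ℕ) (hd : 3 ≤ d) (hd' : 3 ≤ d')
    (a b a' b' : ℤ) (hab : (a, b) ∈ E d) (hab' : (a', b') ∈ E d')
    (hiso : IsIsomorphicForm (binomialForm d a b) (binomialForm d' a' b')) :
    d = d' ∧ a = a' ∧ b = b' := by
  obtain ⟨γ, hdet, hcomp⟩ := hiso
  set p := γ 0 0 with hp
  set q := γ 0 1 with hq
  set r := γ 1 0 with hr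
  set s := γ 1 1 with hs
  have hdet2 : p * s - q * r ≠ 0 := by
    rwa [Matrix.det_fin_two] at hdet
  obtain ⟨ha0, hb0⟩ := hnz d hd (a, b) hab
  obtain ⟨ha0', hb0'⟩ := hnz d' hd' (a', b') hab'
  have haQ : (a : ℚ) ≠ 0 := Int.cast_ne_zero.mpr ha0
  have hbQ : (b : ℚ) ≠ 0 := Int.cast_ne_zero.mpr hb0
  have haQ' : (a' : ℚ) ≠ 0 := Int.cast_ne_zero.mpr ha0'
  have hbQ' : (b' : ℚ) ≠ 0 := Int.cast_ne_zero.mpr hb0'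
  have hexp : formComp γ (binomialForm d a b)
      = C (a:ℚ) * (C p * X 0 + C q * X 1) ^ d + C (b:ℚ) * (C r * X 0 + C s * X 1) ^ d := by
    simp [formComp, binomialForm, hp, hq, hr, hs]
  have key : ∀ i j : ℕ,
      (if i + j = d then (d.choose i : ℚ) * ((a:ℚ) * (p ^ i * q ^ j) + (b:ℚ) * (r ^ i * s ^ j)) else 0)
      = (if d' = i ∧ 0 = j then (a' : ℚ) else 0) + (if 0 = i ∧ d' = j then (b' : ℚ) else 0) := by
    intro i j
    have := congrArg (coeff (Finsupp.single 0 i + Finsupp.single 1 j)) hcomp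
    rw [hexp, coeff_add, coeff_C_mul, coeff_C_mul, coeff_lin_pow, coeff_lin_pow,
      coeff_binomialForm] at this
    rw [← this]
    split_ifs <;> ring
  -- step 1 : d = d'
  have hdd : d = d' := by
    by_contra hne
    have := key d' 0
    rw [if_neg (by omega), if_pos ⟨rfl, rfl⟩, if_neg (by omega)] at this
    exact haQ' (by linarith [this])
  subst hdd
  refine ⟨rfl, ?_⟩
  -- the five coefficient equations
  have E1 : (a:ℚ) * p ^ d + (b:ℚ) * r ^ d = a' := by
    have := key d 0
    rw [if_pos (by omega), if_pos ⟨rfl, rfl⟩, if_neg (by omega), Nat.choose_self] at this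
    push_cast at this
    linarith [this]
  have E2 : (a:ℚ) * q ^ d + (b:ℚ) * s ^ d = b' := by
    have := key 0 d
    rw [if_pos (by omega), if_neg (by omega), if_pos ⟨rfl, rfl⟩, Nat.choose_zero_right] at this
    push_cast at this
    linarith [this]
  have E3 : (a:ℚ) * (p ^ (d-1) * q ^ 1) + (b:ℚ) * (r ^ (d-1) * s ^ 1) = 0 := by
    have := key (d-1) 1
    rw [if_pos (by omega), if_neg (by omega), if_neg (by omega)] at this
    have hc : (d.choose (d-1) : ℚ) ≠ 0 := by
      exact_mod_cast Nat.cast_ne_zero.mpr (Nat.choose_pos (by omega)).ne'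
    rw [add_zero] at this
    rcases mul_eq_zero.mp this with h | h
    · exact absurd h hc
    · exact h
  have E5 : (a:ℚ) * (p ^ (d-2) * q ^ 2) + (b:ℚ) * (r ^ (d-2) * s ^ 2) = 0 := by
    have := key (d-2) 2
    rw [if_pos (by omega), if_neg (by omega), if_neg (by omega)] at this
    have hc : (d.choose (d-2) : ℚ) ≠ 0 := by
      exact_mod_cast Nat.cast_ne_zero.mpr (Nat.choose_pos (by omega)).ne'
    rw [add_zero] at this
    rcases mul_eq_zero.mp this with h | h
    · exact absurd h hc
    · exact h
  -- rewrite exponents with d = e + 3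
  obtain ⟨e, rfl⟩ : ∃ e, d = e + 3 := ⟨d - 3, by omega⟩
  simp only [show e + 3 - 1 = e + 2 from rfl, show e + 3 - 2 = e + 1 from rfl] at E3 E5
  have hPQ : p = 0 ∨ q = 0 := by
    have h : (a:ℚ) * p ^ (e+1) * q * (p * s - q * r) = 0 := by
      linear_combination s * E3 - r * E5
    rcases mul_eq_zero.mp h with h | h
    · rcases mul_eq_zero.mp h with h | h
      · rcases mul_eq_zero.mp h with h | h
        · exact absurd h haQ
        · exact Or.inl (pow_eq_zero_iff (by omega) |>.mp h)
      · exact Or.inr h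
    · exact absurd h hdet2
  have hRS : r = 0 ∨ s = 0 := by
    have h : (b:ℚ) * r ^ (e+1) * s * (p * s - q * r) = 0 := by
      linear_combination p * E5 - q * E3
    rcases mul_eq_zero.mp h with h | h
    · rcases mul_eq_zero.mp h with h | h
      · rcases mul_eq_zero.mp h with h | h
        · exact absurd h hbQ
        · exact Or.inl (pow_eq_zero_iff (by omega) |>.mp h)
      · exact Or.inr h
    · exact absurd h hdet2
  by_contra hcon
  have hnepair : ((a, b) : ℤ × ℤ) ≠ (a', b') := by
    simpa [Prod.ext_iff] using hcon
  rcases hPQ with hP | hQ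
  · rcases hRS with hR | hS
    · exact hdet2 (by rw [hP, hR]; ring)
    · -- antidiagonal: p = 0, s = 0
      have hqne : q ≠ 0 := fun h => hdet2 (by rw [hP, h]; ring)
      have hrne : r ≠ 0 := fun h => hdet2 (by rw [hS, h]; ring)
      have hA' : (b:ℚ) * r ^ (e+3) = a' := by
        rw [hP] at E1; simpa [zero_pow] using E1
      have hB' : (a:ℚ) * q ^ (e+3) = b' := by
        rw [hS] at E2; simpa [zero_pow] using E2
      rcases hC2 (e+3) hd (a, b) hab (a', b') hab' hnepair with h | h
      · exact h ⟨q⁻¹, by rw [← hB']; field_simp; rw [← mul_pow, mul_one_div_cancel hqne, one_pow]⟩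
      · exact h ⟨r⁻¹, by rw [← hA']; field_simp; rw [← mul_pow, mul_one_div_cancel hrne, one_pow]⟩
  · rcases hRS with hR | hS
    · -- diagonal: q = 0, r = 0
      have hpne : p ≠ 0 := fun h => hdet2 (by rw [hQ, h]; ring)
      have hsne : s ≠ 0 := fun h => hdet2 (by rw [hR, h]; ring)
      have hA' : (a:ℚ) * p ^ (e+3) = a' := by
        rw [hR] at E1; simpa [zero_pow] using E1
      have hB' : (b:ℚ) * s ^ (e+3) = b' := by
        rw [hQ] at E2; simpa [zero_pow] using E2
      rcases hC1 (e+3) hd (a, b) hab (a', b') hab' hnepair with h | h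
      · exact h ⟨p⁻¹, by rw [← hA']; field_simp; rw [← mul_pow, mul_one_div_cancel hpne, one_pow]⟩
      · exact h ⟨s⁻¹, by rw [← hB']; field_simp; rw [← mul_pow, mul_one_div_cancel hsne, one_pow]⟩
    · exact hdet2 (by rw [hQ, hS]; ring)
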